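/- Fix positive integers k, ℓ, m and an integer i with 0 ≤ i ≤ ℓ−1. For all complex q, z with |q| < 1, the sum of z^{|S|} q^{Σ_{s∈S} s} over all finite subsets S of the positive integers satisfying b_S(km) = ℓm − i equals ((-zq;q)_{km}/(q;q)_{ℓm-i}) z^{ℓm-i} q^{(ℓm-i)((2k+ℓ)m-i+1)/2}. -/

import Mathlib

set_option maxHeartbeats 1000000


open Finset

namespace KlRankAux

def upSet (n : ℕ) (p : ℕ × {C : Finset ℕ // C.card = n}) : Finset ℕ :=
  insert p.1 ((p.2 : Finset ℕ).image (fun c => c + (p.1 + 1)))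

lemma not_mem_up (n : ℕ) (p : ℕ × {C : Finset ℕ // C.card = n}) :
    p.1 ∉ (p.2 : Finset ℕ).image (fun c => c + (p.1 + 1)) := by
  simp only [Finset.mem_image, not_exists, not_and]
  intro x hx; omega

lemma upSet_card (n : ℕ) (p : ℕ × {C : Finset ℕ // C.card = n}) :
    (upSet n p).card = n + 1 := by
  rw [upSet, Finset.card_insert_of_notMem (not_mem_up n p),
    Finset.card_image_of_injOn (fun x _ y _ h => by omega), p.2.2]

def up (n : ℕ) (p : ℕ × {C : Finset ℕ // C.card = n}) : {C : Finset ℕ // C.card = n + 1} :=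
  ⟨upSet n p, upSet_card n p⟩

def dmin (n : ℕ) (C : {C : Finset ℕ // C.card = n + 1}) : ℕ :=
  C.1.min' (Finset.card_pos.mp (by omega))

lemma dmin_mem (n : ℕ) (C : {C : Finset ℕ // C.card = n + 1}) : dmin n C ∈ C.1 :=
  Finset.min'_mem _ _

lemma dmin_lt (n : ℕ) (C : {C : Finset ℕ // C.card = n + 1}) {x : ℕ}
    (hx : x ∈ C.1.erase (dmin n C)) : dmin n C < x :=
  lt_of_le_of_ne (Finset.min'_le _ x (Finset.mem_of_mem_erase hx))
    (Ne.symm (Finset.ne_of_mem_erase hx))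

def downSet (n : ℕ) (C : {C : Finset ℕ // C.card = n + 1}) : Finset ℕ :=
  (C.1.erase (dmin n C)).image (fun c => c - (dmin n C + 1))

lemma downSet_card (n : ℕ) (C : {C : Finset ℕ // C.card = n + 1}) :
    (downSet n C).card = n := by
  rw [downSet, Finset.card_image_of_injOn, Finset.card_erase_of_mem (dmin_mem n C), C.2]
  · rfl
  · intro x hx y hy hxy
    have hx' := dmin_lt n C hx
    have hy' := dmin_lt n C hy
    simp only at hxy
    omega

def down (n : ℕ) (C : {C : Finset ℕ // C.card = n + 1}) : ℕ × {C : Finset ℕ // C.card = n} :=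
  (dmin n C, ⟨downSet n C, downSet_card n C⟩)

lemma dmin_up (n : ℕ) (p : ℕ × {C : Finset ℕ // C.card = n}) : dmin n (up n p) = p.1 := by
  apply le_antisymm
  · exact Finset.min'_le _ _ (Finset.mem_insert_self _ _)
  · apply Finset.le_min'
    intro y hy
    rcases Finset.mem_insert.mp hy with h | h
    · omega
    · obtain ⟨x, _, rfl⟩ := Finset.mem_image.mp h
      omega

lemma down_up (n : ℕ) (p : ℕ × {C : Finset ℕ // C.card = n}) : down n (up n p) = p := by
  have h1 := dmin_up n p
  have h2 : downSet n (up n p) = (p.2 : Finset ℕ) := by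
    rw [downSet, h1]
    have herase : (up n p).1.erase p.1 = (p.2 : Finset ℕ).image (fun c => c + (p.1 + 1)) := by
      rw [up]
      exact Finset.erase_insert (not_mem_up n p)
    rw [herase, Finset.image_image,
      Finset.image_congr (g := id) (fun x _ => by simp only [Function.comp, id_eq]; omega),
      Finset.image_id]
  refine Prod.ext h1 (Subtype.ext ?_)
  exact h2

lemma up_down (n : ℕ) (C : {C : Finset ℕ // C.card = n + 1}) : up n (down n C) = C := by
  apply Subtype.ext
  show insert (dmin n C) ((downSet n C).image (fun c => c + (dmin n C + 1))) = C.1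
  rw [downSet, Finset.image_image,
    Finset.image_congr (g := id) (fun x hx => by
      have := dmin_lt n C hx
      simp only [Function.comp, id_eq]; omega),
    Finset.image_id, Finset.insert_erase (dmin_mem n C)]

def downEquiv (n : ℕ) : {C : Finset ℕ // C.card = n + 1} ≃ ℕ × {C : Finset ℕ // C.card = n} where
  toFun := down n
  invFun := up n
  left_inv := up_down n
  right_inv := down_up n

lemma sum_up (n : ℕ) (p : ℕ × {C : Finset ℕ // C.card = n}) :
    ∑ c ∈ (up n p : Finset ℕ), c = (n + 1) * p.1 + n + ∑ c ∈ (p.2 : Finset ℕ), c := by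
  show ∑ c ∈ insert p.1 ((p.2 : Finset ℕ).image (fun c => c + (p.1 + 1))), c = _
  rw [Finset.sum_insert (not_mem_up n p),
    Finset.sum_image (fun x _ y _ h => by omega), Finset.sum_add_distrib,
    Finset.sum_const, p.2.2, smul_eq_mul]
  ring


lemma sum_downEquiv_symm (n : ℕ) (p : ℕ × {C : Finset ℕ // C.card = n}) :
    ∑ c ∈ (((downEquiv n).symm p : {C : Finset ℕ // C.card = n + 1}) : Finset ℕ), c
      = (n + 1) * p.1 + n + ∑ c ∈ (p.2 : Finset ℕ), c :=
  sum_up n p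

lemma realKey (r : ℝ) (h0 : 0 ≤ r) (h1 : r < 1) (n : ℕ) :
    HasSum (fun C : {C : Finset ℕ // C.card = n} => r ^ (∑ c ∈ (C : Finset ℕ), c))
      (r ^ (∑ j ∈ Finset.range n, j) / ∏ j ∈ Finset.range n, (1 - r ^ (j + 1))) := by
  induction n with
  | zero =>
    haveI : Unique {C : Finset ℕ // C.card = 0} :=
      ⟨⟨⟨∅, Finset.card_empty⟩⟩, fun C => Subtype.ext (Finset.card_eq_zero.mp C.2)⟩
    have h := hasSum_fintype (fun C : {C : Finset ℕ // C.card = 0} => r ^ (∑ c ∈ (C : Finset ℕ), c))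
    have h2 : ∑ C : {C : Finset ℕ // C.card = 0}, r ^ (∑ c ∈ (C : Finset ℕ), c) = 1 := by
      rw [Fintype.sum_unique]
      have hd : ((default : {C : Finset ℕ // C.card = 0}) : Finset ℕ) = ∅ :=
        Finset.card_eq_zero.mp (default : {C : Finset ℕ // C.card = 0}).2
      rw [hd]
      simp
    rw [h2] at h
    simpa using h
  | succ n IH =>
    have hpow : ‖r ^ (n + 1)‖ < 1 := by
      rw [Real.norm_eq_abs, abs_of_nonneg (pow_nonneg h0 _)]
      exact pow_lt_one₀ h0 h1 (by omega)
    have hgeom : HasSum (fun b : ℕ => (r ^ (n + 1)) ^ b) (1 - r ^ (n + 1))⁻¹ :=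
      hasSum_geometric_of_norm_lt_one hpow
    have h2 : HasSum (fun C : {C : Finset ℕ // C.card = n} => r ^ n * r ^ (∑ c ∈ (C : Finset ℕ), c))
        (r ^ n * (r ^ (∑ j ∈ Finset.range n, j) / ∏ j ∈ Finset.range n, (1 - r ^ (j + 1)))) :=
      IH.mul_left (r ^ n)
    have hsum : Summable (fun x : ℕ × {C : Finset ℕ // C.card = n} =>
        (r ^ (n + 1)) ^ x.1 * (r ^ n * r ^ (∑ c ∈ (x.2 : Finset ℕ), c))) :=
      by
      apply Summable.mul_of_nonneg hgeom.summable h2.summable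
      · intro b
        positivity
      · intro C
        positivity
    have G := hgeom.mul h2 hsum
    have hfun : (fun C : {C : Finset ℕ // C.card = n + 1} => r ^ (∑ c ∈ (C : Finset ℕ), c))
        ∘ (downEquiv n).symm = (fun x : ℕ × {C : Finset ℕ // C.card = n} =>
        (r ^ (n + 1)) ^ x.1 * (r ^ n * r ^ (∑ c ∈ (x.2 : Finset ℕ), c))) := by
      funext p
      simp only [Function.comp_apply]
      rw [sum_downEquiv_symm, pow_add, pow_add, ← pow_mul]
      ring
    have H : HasSum (fun C : {C : Finset ℕ // C.card = n + 1} => r ^ (∑ c ∈ (C : Finset ℕ), c))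
        ((1 - r ^ (n + 1))⁻¹ *
          (r ^ n * (r ^ (∑ j ∈ Finset.range n, j) / ∏ j ∈ Finset.range n, (1 - r ^ (j + 1))))) := by
      apply (Equiv.hasSum_iff ((downEquiv n).symm)).mp
      rw [hfun]
      exact G
    have hval : (1 - r ^ (n + 1))⁻¹ *
          (r ^ n * (r ^ (∑ j ∈ Finset.range n, j) / ∏ j ∈ Finset.range n, (1 - r ^ (j + 1))))
        = r ^ (∑ j ∈ Finset.range (n + 1), j) / ∏ j ∈ Finset.range (n + 1), (1 - r ^ (j + 1)) := by
      rw [Finset.sum_range_succ, Finset.prod_range_succ, pow_add, div_eq_mul_inv,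
        div_eq_mul_inv, mul_inv]
      ring
    rw [hval] at H
    exact H


lemma realKeySummable (r : ℝ) (h0 : 0 ≤ r) (h1 : r < 1) (n : ℕ) :
    Summable (fun C : {C : Finset ℕ // C.card = n} => r ^ (∑ c ∈ (C : Finset ℕ), c)) :=
  (realKey r h0 h1 n).summable

lemma cKey (q : ℂ) (hq : ‖q‖ < 1) (n : ℕ) :
    HasSum (fun C : {C : Finset ℕ // C.card = n} => q ^ (∑ c ∈ (C : Finset ℕ), c))
      (q ^ (∑ j ∈ Finset.range n, j) / ∏ j ∈ Finset.range n, (1 - q ^ (j + 1))) := by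
  induction n with
  | zero =>
    haveI : Unique {C : Finset ℕ // C.card = 0} :=
      ⟨⟨⟨∅, Finset.card_empty⟩⟩, fun C => Subtype.ext (Finset.card_eq_zero.mp C.2)⟩
    have h := hasSum_fintype (fun C : {C : Finset ℕ // C.card = 0} => q ^ (∑ c ∈ (C : Finset ℕ), c))
    have h2 : ∑ C : {C : Finset ℕ // C.card = 0}, q ^ (∑ c ∈ (C : Finset ℕ), c) = 1 := by
      rw [Fintype.sum_unique]
      have hd : ((default : {C : Finset ℕ // C.card = 0}) : Finset ℕ) = ∅ :=
        Finset.card_eq_zero.mp (default : {C : Finset ℕ // C.card = 0}).2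
      rw [hd]
      simp
    rw [h2] at h
    simpa using h
  | succ n IH =>
    have hpow : ‖q ^ (n + 1)‖ < 1 := by
      rw [norm_pow]
      exact pow_lt_one₀ (norm_nonneg q) hq (by omega)
    have hgeom : HasSum (fun b : ℕ => (q ^ (n + 1)) ^ b) (1 - q ^ (n + 1))⁻¹ :=
      hasSum_geometric_of_norm_lt_one hpow
    have h2 : HasSum (fun C : {C : Finset ℕ // C.card = n} => q ^ n * q ^ (∑ c ∈ (C : Finset ℕ), c))
        (q ^ n * (q ^ (∑ j ∈ Finset.range n, j) / ∏ j ∈ Finset.range n, (1 - q ^ (j + 1)))) :=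
      IH.mul_left (q ^ n)
    have hsum : Summable (fun x : ℕ × {C : Finset ℕ // C.card = n} =>
        (q ^ (n + 1)) ^ x.1 * (q ^ n * q ^ (∑ c ∈ (x.2 : Finset ℕ), c))) := by
      have hf : Summable (fun b : ℕ => ‖(q ^ (n + 1)) ^ b‖) := by
        have : Summable (fun b : ℕ => ‖q ^ (n + 1)‖ ^ b) :=
          summable_geometric_of_lt_one (norm_nonneg _) hpow
        simpa [norm_pow] using this
      have hg : Summable (fun C : {C : Finset ℕ // C.card = n} =>
          ‖q ^ n * q ^ (∑ c ∈ (C : Finset ℕ), c)‖) := by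
        have := (realKeySummable ‖q‖ (norm_nonneg q) hq n).mul_left (‖q‖ ^ n)
        apply this.congr
        intro C
        simp [norm_mul, norm_pow]
      exact summable_mul_of_summable_norm (R := ℂ)
        (f := fun b : ℕ => (q ^ (n + 1)) ^ b)
        (g := fun C : {C : Finset ℕ // C.card = n} => q ^ n * q ^ (∑ c ∈ (C : Finset ℕ), c))
        hf hg
    have G := hgeom.mul h2 hsum
    have hfun : (fun C : {C : Finset ℕ // C.card = n + 1} => q ^ (∑ c ∈ (C : Finset ℕ), c))
        ∘ (downEquiv n).symm = (fun x : ℕ × {C : Finset ℕ // C.card = n} =>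
        (q ^ (n + 1)) ^ x.1 * (q ^ n * q ^ (∑ c ∈ (x.2 : Finset ℕ), c))) := by
      funext p
      simp only [Function.comp_apply]
      rw [sum_downEquiv_symm, pow_add, pow_add, ← pow_mul]
      ring
    have H : HasSum (fun C : {C : Finset ℕ // C.card = n + 1} => q ^ (∑ c ∈ (C : Finset ℕ), c))
        ((1 - q ^ (n + 1))⁻¹ *
          (q ^ n * (q ^ (∑ j ∈ Finset.range n, j) / ∏ j ∈ Finset.range n, (1 - q ^ (j + 1))))) := by
      apply (Equiv.hasSum_iff ((downEquiv n).symm)).mp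
      rw [hfun]
      exact G
    have hval : (1 - q ^ (n + 1))⁻¹ *
          (q ^ n * (q ^ (∑ j ∈ Finset.range n, j) / ∏ j ∈ Finset.range n, (1 - q ^ (j + 1))))
        = q ^ (∑ j ∈ Finset.range (n + 1), j) / ∏ j ∈ Finset.range (n + 1), (1 - q ^ (j + 1)) := by
      rw [Finset.sum_range_succ, Finset.prod_range_succ, pow_add, div_eq_mul_inv,
        div_eq_mul_inv, mul_inv]
      ring
    rw [hval] at H
    exact H


def splitEquiv (N n : ℕ) :
    {T : Finset ℕ // (T.filter (fun t => N ≤ t)).card = n} ≃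
      ({A : Finset ℕ // A ⊆ Finset.range N} × {B : Finset ℕ // (∀ b ∈ B, N ≤ b) ∧ B.card = n}) where
  toFun T :=
    (⟨T.1.filter (fun t => ¬ N ≤ t), by
        intro x hx
        rw [Finset.mem_range]
        have := (Finset.mem_filter.mp hx).2
        omega⟩,
     ⟨T.1.filter (fun t => N ≤ t), fun b hb => (Finset.mem_filter.mp hb).2, T.2⟩)
  invFun p := ⟨p.1.1 ∪ p.2.1, by
    rw [Finset.filter_union,
      Finset.filter_false_of_mem (fun x hx => by
        have := Finset.mem_range.mp (p.1.2 hx); omega),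
      Finset.filter_true_of_mem p.2.2.1, Finset.empty_union, p.2.2.2]⟩
  left_inv T := by
    apply Subtype.ext
    show T.1.filter (fun t => ¬ N ≤ t) ∪ T.1.filter (fun t => N ≤ t) = T.1
    rw [Finset.union_comm]
    exact Finset.filter_union_filter_not_eq _ _
  right_inv p := by
    obtain ⟨⟨A, hA⟩, ⟨B, hB⟩⟩ := p
    refine Prod.ext (Subtype.ext ?_) (Subtype.ext ?_)
    · show (A ∪ B).filter (fun t => ¬ N ≤ t) = A
      rw [Finset.filter_union,
        Finset.filter_true_of_mem (fun x hx => by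
          have := Finset.mem_range.mp (hA hx); omega),
        Finset.filter_false_of_mem (fun x hx => by
          have := hB.1 x hx; omega),
        Finset.union_empty]
    · show (A ∪ B).filter (fun t => N ≤ t) = B
      rw [Finset.filter_union,
        Finset.filter_false_of_mem (fun x hx => by
          have := Finset.mem_range.mp (hA hx); omega),
        Finset.filter_true_of_mem hB.1, Finset.empty_union]

def shiftEquiv (N n : ℕ) :
    {B : Finset ℕ // (∀ b ∈ B, N ≤ b) ∧ B.card = n} ≃ {C : Finset ℕ // C.card = n} where
  toFun B := ⟨B.1.image (fun b => b - N), by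
    rw [Finset.card_image_of_injOn (fun x hx y hy h => by
      have := B.2.1 x hx; have := B.2.1 y hy; omega), B.2.2]⟩
  invFun C := ⟨C.1.image (fun c => c + N),
    fun b hb => by obtain ⟨c, _, rfl⟩ := Finset.mem_image.mp hb; omega,
    by rw [Finset.card_image_of_injOn (fun x _ y _ h => by omega), C.2]⟩
  left_inv B := by
    apply Subtype.ext
    show (B.1.image (fun b => b - N)).image (fun c => c + N) = B.1
    rw [Finset.image_image,
      Finset.image_congr (g := id) (fun x hx => by
        have := B.2.1 x hx
        simp only [Function.comp, id_eq]
        omega),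
      Finset.image_id]
  right_inv C := by
    apply Subtype.ext
    show (C.1.image (fun c => c + N)).image (fun b => b - N) = C.1
    rw [Finset.image_image,
      Finset.image_congr (g := id) (fun x hx => by
        simp only [Function.comp, id_eq]
        omega),
      Finset.image_id]

lemma mainAux (N n : ℕ) (q z : ℂ) (hq : ‖q‖ < 1) :
    HasSum (fun T : {T : Finset ℕ // (T.filter (fun t => N ≤ t)).card = n} =>
        z ^ (T : Finset ℕ).card * q ^ ((∑ t ∈ (T : Finset ℕ), t) + (T : Finset ℕ).card))
      ((∏ a ∈ Finset.range N, (1 + z * q ^ (a + 1))) *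
        (z ^ n * q ^ (n * (N + 1)) *
          (q ^ (∑ j ∈ Finset.range n, j) / ∏ j ∈ Finset.range n, (1 - q ^ (j + 1))))) := by
  classical
  haveI : Fintype {A : Finset ℕ // A ⊆ Finset.range N} :=
    Fintype.subtype ((Finset.range N).powerset) (fun A => Finset.mem_powerset)
  -- the first factor
  set f1 : {A : Finset ℕ // A ⊆ Finset.range N} → ℂ :=
    fun A => ∏ a ∈ (A : Finset ℕ), (z * q ^ (a + 1)) with hf1def
  have hf1 : HasSum f1 (∏ a ∈ Finset.range N, (1 + z * q ^ (a + 1))) := by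
    have h := hasSum_fintype f1
    have hsum : ∑ A : {A : Finset ℕ // A ⊆ Finset.range N}, f1 A
        = ∏ a ∈ Finset.range N, (1 + z * q ^ (a + 1)) := by
      rw [← Finset.sum_subtype ((Finset.range N).powerset)
        (fun A => Finset.mem_powerset) (fun A => ∏ a ∈ A, (z * q ^ (a + 1)))]
      have hpa := Finset.prod_add (fun a => z * q ^ (a + 1)) (fun _ => (1 : ℂ))
        (Finset.range N)
      simp only [Finset.prod_const_one, mul_one] at hpa
      rw [← hpa]
      exact Finset.prod_congr rfl (fun a _ => by ring)
    rw [hsum] at h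
    exact h
  -- the second factor
  set f2 : {C : Finset ℕ // C.card = n} → ℂ :=
    fun C => z ^ n * q ^ (n * (N + 1)) * q ^ (∑ c ∈ (C : Finset ℕ), c) with hf2def
  have hf2 : HasSum f2 (z ^ n * q ^ (n * (N + 1)) *
      (q ^ (∑ j ∈ Finset.range n, j) / ∏ j ∈ Finset.range n, (1 - q ^ (j + 1)))) := by
    exact (cKey q hq n).mul_left (z ^ n * q ^ (n * (N + 1)))
  -- summability of the product family
  have hsum12 : Summable (fun p : {A : Finset ℕ // A ⊆ Finset.range N} ×
      {C : Finset ℕ // C.card = n} => f1 p.1 * f2 p.2) := by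
    have hf : Summable (fun A : {A : Finset ℕ // A ⊆ Finset.range N} => ‖f1 A‖) :=
      (hasSum_fintype _).summable
    have hg : Summable (fun C : {C : Finset ℕ // C.card = n} => ‖f2 C‖) := by
      have := (realKeySummable ‖q‖ (norm_nonneg q) hq n).mul_left
        (‖z ^ n * q ^ (n * (N + 1))‖)
      apply this.congr
      intro C
      simp [hf2def, norm_mul, norm_pow]
    exact summable_mul_of_summable_norm (R := ℂ) (f := f1) (g := f2) hf hg
  have hF : HasSum (fun p : {A : Finset ℕ // A ⊆ Finset.range N} ×
      {C : Finset ℕ // C.card = n} => f1 p.1 * f2 p.2)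
      ((∏ a ∈ Finset.range N, (1 + z * q ^ (a + 1))) *
        (z ^ n * q ^ (n * (N + 1)) *
          (q ^ (∑ j ∈ Finset.range n, j) / ∏ j ∈ Finset.range n, (1 - q ^ (j + 1))))) :=
    hf1.mul hf2 hsum12
  -- transport along the equivalence
  set e := (splitEquiv N n).trans
    (Equiv.prodCongr (Equiv.refl {A : Finset ℕ // A ⊆ Finset.range N}) (shiftEquiv N n)) with hedef
  apply (Equiv.hasSum_iff e.symm).mp
  have hcomp : (fun T : {T : Finset ℕ // (T.filter (fun t => N ≤ t)).card = n} =>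
      z ^ (T : Finset ℕ).card * q ^ ((∑ t ∈ (T : Finset ℕ), t) + (T : Finset ℕ).card))
      ∘ e.symm = fun p : {A : Finset ℕ // A ⊆ Finset.range N} ×
      {C : Finset ℕ // C.card = n} => f1 p.1 * f2 p.2 := by
    funext p
    obtain ⟨⟨A, hA⟩, ⟨C, hC⟩⟩ := p
    simp only [Function.comp_apply, hedef, Equiv.symm_trans_apply, Equiv.prodCongr_symm,
      Equiv.prodCongr_apply, Equiv.refl_symm, Prod.map, Equiv.refl_apply]
    -- the underlying finset of `e.symm p`
    have hB : ∀ b ∈ C.image (fun c => c + N), N ≤ b := fun b hb => by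
      obtain ⟨c, _, rfl⟩ := Finset.mem_image.mp hb; omega
    have hBcard : (C.image (fun c => c + N)).card = n := by
      rw [Finset.card_image_of_injOn (fun x _ y _ h => by omega), hC]
    have hshift : ((shiftEquiv N n).symm ⟨C, hC⟩ : Finset ℕ) = C.image (fun c => c + N) := rfl
    have hsplit : (((splitEquiv N n).symm
        (⟨A, hA⟩, (shiftEquiv N n).symm ⟨C, hC⟩)) : Finset ℕ)
        = A ∪ C.image (fun c => c + N) := by
      rw [show ((splitEquiv N n).symm
        (⟨A, hA⟩, (shiftEquiv N n).symm ⟨C, hC⟩) : Finset ℕ)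
        = A ∪ ((shiftEquiv N n).symm ⟨C, hC⟩ : Finset ℕ) from rfl, hshift]
    rw [hsplit]
    -- disjointness
    have hdisj : Disjoint A (C.image (fun c => c + N)) := by
      rw [Finset.disjoint_left]
      intro a haA haB
      have h1 := Finset.mem_range.mp (hA haA)
      have h2 := hB a haB
      omega
    have hcard : (A ∪ C.image (fun c => c + N)).card = A.card + n := by
      rw [Finset.card_union_of_disjoint hdisj, hBcard]
    have hsumU : ∑ t ∈ A ∪ C.image (fun c => c + N), t
        = (∑ a ∈ A, a) + ((∑ c ∈ C, c) + n * N) := by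
      rw [Finset.sum_union hdisj, Finset.sum_image (fun x _ y _ h => by omega), Finset.sum_add_distrib, Finset.sum_const, hC, smul_eq_mul]
    rw [hcard, hsumU]
    -- compute f1
    have hf1A : f1 ⟨A, hA⟩ = z ^ A.card * q ^ ((∑ a ∈ A, a) + A.card) := by
      rw [hf1def]
      simp only
      rw [Finset.prod_mul_distrib, Finset.prod_const, Finset.prod_pow_eq_pow_sum,
        Finset.sum_add_distrib, Finset.sum_const, smul_eq_mul, mul_one]
    rw [hf1A, hf2def]
    simp only
    rw [show A.card + n = A.card + n from rfl]
    have hexp : (∑ a ∈ A, a) + ((∑ c ∈ C, c) + n * N) + (A.card + n)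
        = ((∑ a ∈ A, a) + A.card) + (n * (N + 1) + (∑ c ∈ C, c)) := by ring
    rw [hexp, pow_add z, pow_add q, pow_add q]
    ring
  rw [hcomp]
  exact hF

end KlRankAux

/-- Generating function for `(k,ℓ)`-rank-`m` tilings with `b(km) = ℓm - i`
(`0 ≤ i ≤ ℓ-1`): the sum of `z^|S| q^(Σ_{s∈S} s)` over such finite subsets `S`
of `ℤ_{>0}` is `((-zq;q)_{km}/(q;q)_{ℓm-i}) z^{ℓm-i} q^{(ℓm-i)((2k+ℓ)m-i+1)/2}`. -/
theorem kl_rank_case_one_generating_function (k l m i : ℕ)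
    (hk : 0 < k) (hl : 0 < l) (hm : 0 < m) (hi : i < l)
    (q z : ℂ) (hq : ‖q‖ < 1) :
    (∑' S : {S : Finset ℕ+ //
        (S.filter (fun s : ℕ+ => k * m < (s : ℕ))).card = l * m - i},
      z ^ (S : Finset ℕ+).card * q ^ (∑ s ∈ (S : Finset ℕ+), (s : ℕ))) =
    ((∏ a ∈ Finset.range (k * m), (1 + z * q ^ (a + 1))) /
        (∏ a ∈ Finset.range (l * m - i), (1 - q ^ (a + 1)))) *
      z ^ (l * m - i) * q ^ ((l * m - i) * ((2 * k + l) * m - i + 1) / 2) := by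
  classical
  have hq' : ‖q‖ < 1 := by exact hq
  have H := KlRankAux.mainAux (k * m) (l * m - i) q z hq'
  -- transfer from `ℕ+` finsets to `ℕ` finsets
  have hiff : ∀ S : Finset ℕ+,
      (S.filter (fun s : ℕ+ => k * m < (s : ℕ))).card = l * m - i ↔
      ((Equiv.pnatEquivNat.finsetCongr S).filter (fun t => k * m ≤ t)).card = l * m - i := by
    intro S
    rw [Equiv.finsetCongr_apply, Finset.filter_map, Finset.card_map]
    have hfc : S.filter ((fun t => k * m ≤ t) ∘ Equiv.pnatEquivNat.toEmbedding)
        = S.filter (fun s : ℕ+ => k * m < (s : ℕ)) := by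
      apply Finset.filter_congr
      intro s _
      have hs : 0 < (s : ℕ) := s.2
      have hnp : ((fun t => k * m ≤ t) ∘ Equiv.pnatEquivNat.toEmbedding) s
          = (k * m ≤ (s : ℕ) - 1) := rfl
      rw [hnp]
      constructor <;> intro h' <;> omega
    rw [hfc]
  let e0 : {S : Finset ℕ+ // (S.filter (fun s : ℕ+ => k * m < (s : ℕ))).card = l * m - i} ≃
      {T : Finset ℕ // (T.filter (fun t => k * m ≤ t)).card = l * m - i} :=
    Equiv.subtypeEquiv Equiv.pnatEquivNat.finsetCongr hiff
  have hcomp : (fun T : {T : Finset ℕ // (T.filter (fun t => k * m ≤ t)).card = l * m - i} =>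
      z ^ (T : Finset ℕ).card * q ^ ((∑ t ∈ (T : Finset ℕ), t) + (T : Finset ℕ).card)) ∘ e0
      = (fun S : {S : Finset ℕ+ //
        (S.filter (fun s : ℕ+ => k * m < (s : ℕ))).card = l * m - i} =>
      z ^ (S : Finset ℕ+).card * q ^ (∑ s ∈ (S : Finset ℕ+), (s : ℕ))) := by
    funext S
    have he0 : (e0 S : Finset ℕ) = (S : Finset ℕ+).map Equiv.pnatEquivNat.toEmbedding := by
      show (Equiv.pnatEquivNat.finsetCongr (S : Finset ℕ+)) = _
      rw [Equiv.finsetCongr_apply]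
    simp only [Function.comp_apply]
    rw [he0, Finset.card_map, Finset.sum_map]
    have hsum : (∑ s ∈ (S : Finset ℕ+), Equiv.pnatEquivNat.toEmbedding s)
        + (S : Finset ℕ+).card = ∑ s ∈ (S : Finset ℕ+), (s : ℕ) := by
      have h2 : ∑ s ∈ (S : Finset ℕ+), (s : ℕ)
          = ∑ s ∈ (S : Finset ℕ+), (PNat.natPred s + 1) :=
        Finset.sum_congr rfl (fun s _ => (PNat.natPred_add_one s).symm)
      have h3 : ∀ s : ℕ+, (Equiv.pnatEquivNat.toEmbedding s : ℕ) = PNat.natPred s :=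
        fun _ => rfl
      rw [h2, Finset.sum_add_distrib, Finset.sum_const, smul_eq_mul, mul_one,
        Finset.sum_congr rfl (fun s _ => h3 s)]
    rw [hsum]
  have H2 : HasSum (fun S : {S : Finset ℕ+ //
        (S.filter (fun s : ℕ+ => k * m < (s : ℕ))).card = l * m - i} =>
      z ^ (S : Finset ℕ+).card * q ^ (∑ s ∈ (S : Finset ℕ+), (s : ℕ)))
      ((∏ a ∈ Finset.range (k * m), (1 + z * q ^ (a + 1))) *
        (z ^ (l * m - i) * q ^ ((l * m - i) * (k * m + 1)) *
          (q ^ (∑ j ∈ Finset.range (l * m - i), j) /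
            ∏ j ∈ Finset.range (l * m - i), (1 - q ^ (j + 1))))) :=
    hcomp ▸ ((Equiv.hasSum_iff e0).mpr H)
  rw [H2.tsum_eq]
  -- final arithmetic
  have him : i ≤ l * m := le_trans (le_of_lt hi) (Nat.le_mul_of_pos_right l hm)
  have hlm : l ≤ l * m := Nat.le_mul_of_pos_right l hm
  have hE : (l * m - i) * ((2 * k + l) * m - i + 1) / 2
      = (l * m - i) * (k * m + 1) + ∑ j ∈ Finset.range (l * m - i), j := by
    have hprodm : (2 * k + l) * m = 2 * (k * m) + l * m := by ring
    have h1 : (2 * k + l) * m - i + 1 = 2 * (k * m) + (l * m - i) + 1 := by omega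
    obtain ⟨n', hn'⟩ : ∃ n', l * m - i = n' + 1 := ⟨l * m - i - 1, by omega⟩
    rw [h1, hn']
    have hG' : (∑ j ∈ Finset.range (n' + 1), j) * 2 = (n' + 1) * n' := by
      rw [Finset.sum_range_id_mul_two, Nat.add_sub_cancel]
    have h2 : (n' + 1) * (2 * (k * m) + (n' + 1) + 1)
        = 2 * ((n' + 1) * (k * m + 1) + ∑ j ∈ Finset.range (n' + 1), j) := by
      calc (n' + 1) * (2 * (k * m) + (n' + 1) + 1)
          = 2 * ((n' + 1) * (k * m + 1)) + (n' + 1) * n' := by ring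
        _ = 2 * ((n' + 1) * (k * m + 1)) + (∑ j ∈ Finset.range (n' + 1), j) * 2 := by
            rw [hG']
        _ = 2 * ((n' + 1) * (k * m + 1) + ∑ j ∈ Finset.range (n' + 1), j) := by ring
    rw [h2, Nat.mul_div_cancel_left _ two_pos]
  rw [hE, pow_add, div_eq_mul_inv, div_eq_mul_inv]
  ring
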